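/- As r → ∞ (r a positive integer), the sequence (1/2) Σ_{k=0}^{r−1} [ C(r−1,k) (1/2)^{r−1} ] · [ C(r+k−1,k) (2/3)^{r} (1/3)^{k} ] converges to 0. (Probabilistically: if X ~ Binomial(r−1, 1/2) and Y ~ NegativeBinomial(r, 1/3) are independent, then (1/2)·P(X = Y) → 0 as r → ∞.) -/

import Mathlib

open Finset Filter

theorem choose_sq_le_centralBinom (n k : ℕ) : (n.choose k)^2 ≤ n.centralBinom := by
  rcases le_or_gt k n with h | h
  · have hv := Nat.add_choose_eq n n n
    have hmem : ((k, n - k) : ℕ × ℕ) ∈ Finset.HasAntidiagonal.antidiagonal n := by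
      simp [Nat.add_sub_cancel' h]
    have hle : n.choose k * n.choose (n - k) ≤ (n + n).choose n := by
      rw [hv]
      exact Finset.single_le_sum (f := fun ij : ℕ × ℕ => n.choose ij.1 * n.choose ij.2)
        (fun i _ => Nat.zero_le _) hmem
    rw [Nat.choose_symm h, ← sq] at hle
    rwa [Nat.centralBinom, two_mul]
  · have : n.choose k = 0 := Nat.choose_eq_zero_of_lt h
    simp [this, Nat.one_le_iff_ne_zero.mpr n.centralBinom_ne_zero]

-- central binom real bound
theorem centralBinom_sq_bound (n : ℕ) : (n.centralBinom : ℝ)^2 * (3*n+1) ≤ 16^n := by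
  induction n with
  | zero => simp [Nat.centralBinom_zero]
  | succ n ih =>
    have key : ((n+1 : ℕ) : ℝ) * (n+1).centralBinom = 2 * (2*n+1) * n.centralBinom := by
      exact_mod_cast congrArg (Nat.cast : ℕ → ℝ) (Nat.succ_mul_centralBinom_succ n)
    have hn1 : (0:ℝ) < (n:ℝ) + 1 := by positivity
    push_cast at key
    have hc : ((n+1).centralBinom : ℝ) = 2 * (2*n+1) * n.centralBinom / (n+1) := by
      field_simp at key ⊢; linarith
    rw [hc]
    rw [div_pow, div_mul_eq_mul_div, div_le_iff₀ (by positivity)]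
    push_cast
    have hcb : (0:ℝ) ≤ (n.centralBinom : ℝ)^2 := by positivity
    have h2 : (2 * (2*(n:ℝ)+1) * n.centralBinom)^2 * (3*(n+1)+1)
        = (n.centralBinom:ℝ)^2 * (4 * (2*n+1)^2 * (3*n+4)) := by ring
    rw [h2]
    have hineq : (4 * (2*(n:ℝ)+1)^2 * (3*n+4)) ≤ 16 * (3*n+1) * (n+1)^2 := by nlinarith [sq_nonneg ((n:ℝ))]
    calc (n.centralBinom:ℝ)^2 * (4 * (2*n+1)^2 * (3*n+4))
        ≤ (n.centralBinom:ℝ)^2 * (16 * (3*n+1) * (n+1)^2) := by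
          exact mul_le_mul_of_nonneg_left hineq hcb
      _ = ((n.centralBinom:ℝ)^2 * (3*n+1)) * (16 * (n+1)^2) := by ring
      _ ≤ 16^n * (16 * (n+1)^2) := by
          apply mul_le_mul_of_nonneg_right ih (by positivity)
      _ = 16 ^ (n+1) * ((n:ℝ)+1)^2 := by ring

theorem negbin_partial_sum_le (s m : ℕ) :
    ∑ k ∈ range m, ((s+k).choose k : ℝ) * (1/3)^k ≤ (3/2)^(s+1) := by
  induction s generalizing m with
  | zero =>
    have : ∑ k ∈ range m, ((0+k).choose k : ℝ) * (1/3)^k = ∑ k ∈ range m, (1/3:ℝ)^k := by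
      apply Finset.sum_congr rfl; intro k _; simp
    rw [this]
    rw [geom_sum_eq (by norm_num : (1/3:ℝ) ≠ 1) m]
    have hx : (0:ℝ) ≤ (1/3:ℝ)^m := by positivity
    have heq : ((1/3:ℝ)^m - 1)/(1/3 - 1) = (1 - (1/3)^m) * (3/2) := by ring
    rw [heq]
    nlinarith
  | succ s ihs =>
    induction m with
    | zero => simp; positivity
    | succ m ihm =>
      have hshift : ∑ k ∈ range (m+1), ((s+1+k).choose k : ℝ) * (1/3)^k
          = 1 + ∑ k ∈ range m, ((s+1+(k+1)).choose (k+1) : ℝ) * (1/3)^(k+1) := by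
        rw [Finset.sum_range_succ']
        simp [add_comm]
      have hpascal : ∀ k : ℕ, ((s+1+(k+1)).choose (k+1) : ℝ)
          = ((s+(k+1)).choose (k+1) : ℝ) + ((s+1+k).choose k : ℝ) := by
        intro k
        have e1 : s+1+(k+1) = (s+k+1)+1 := by omega
        have e2 : s+1+k = s+k+1 := by omega
        have e3 : s+(k+1) = s+k+1 := by omega
        rw [e1, e2, e3, Nat.choose_succ_succ]
        push_cast; ring
      have hsplit : ∑ k ∈ range (m+1), ((s+1+k).choose k : ℝ) * (1/3)^k
          = (∑ k ∈ range (m+1), ((s+k).choose k : ℝ) * (1/3)^k)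
            + (1/3) * ∑ k ∈ range m, ((s+1+k).choose k : ℝ) * (1/3)^k := by
        rw [hshift, Finset.sum_range_succ' (fun k => ((s+k).choose k : ℝ) * (1/3)^k) m]
        rw [Finset.mul_sum]
        simp only [hpascal]
        simp only [add_mul]
        rw [Finset.sum_add_distrib]
        simp only [Nat.choose_zero_right, Nat.cast_one, pow_zero]
        rw [add_comm (∑ k ∈ range m, (((s + (k+1)).choose (k+1) : ℝ)) * (1/3)^(k+1)) (1*1)]
        rw [add_assoc]
        congr 1
        · norm_num
        congr 1
        apply Finset.sum_congr rfl
        intro k _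
        ring
      rw [hsplit]
      have h1 := ihs (m+1)
      have h2 := ihm
      calc (∑ k ∈ range (m+1), ((s+k).choose k : ℝ) * (1/3)^k)
            + (1/3) * ∑ k ∈ range m, ((s+1+k).choose k : ℝ) * (1/3)^k
          ≤ (3/2)^(s+1) + (1/3) * (3/2)^(s+1+1) := by
            apply add_le_add h1
            apply mul_le_mul_of_nonneg_left h2 (by norm_num)
        _ = (3/2)^(s+1+1) := by ring

theorem half_prob_eq_tendsto_zero :
    Tendsto
      (fun r : ℕ =>
        (1 / 2 : ℝ) *
          ∑ k ∈ range r,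
            (((r - 1).choose k : ℝ) * (1 / 2 : ℝ) ^ (r - 1)) *
              (((r + k - 1).choose k : ℝ) * (2 / 3 : ℝ) ^ r * (1 / 3 : ℝ) ^ k))
      atTop (nhds 0) := by
  set f : ℕ → ℝ := fun r : ℕ =>
        (1 / 2 : ℝ) *
          ∑ k ∈ range r,
            (((r - 1).choose k : ℝ) * (1 / 2 : ℝ) ^ (r - 1)) *
              (((r + k - 1).choose k : ℝ) * (2 / 3 : ℝ) ^ r * (1 / 3 : ℝ) ^ k) with hf
  have hnonneg : ∀ r, 0 ≤ f r := by
    intro r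
    apply mul_nonneg (by norm_num)
    apply Finset.sum_nonneg
    intro k _
    positivity
  have key : ∀ n : ℕ, f (n+1) ≤ Real.sqrt (1 / Real.sqrt (n+1)) := by
    intro n
    have hn1 : (0:ℝ) < (n:ℝ)+1 := by positivity
    set B : ℝ := Real.sqrt ((n.centralBinom : ℝ) * (1/4)^n) with hB
    have hBnn : 0 ≤ B := Real.sqrt_nonneg _
    have hp : ∀ k : ℕ, ((n.choose k : ℝ) * (1/2)^n) ≤ B := by
      intro k
      apply Real.le_sqrt_of_sq_le
      rw [mul_pow]
      have h4 : ((1/2:ℝ)^n)^2 = (1/4)^n := by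
        rw [← pow_mul, mul_comm n 2, pow_mul]; norm_num
      rw [h4]
      apply mul_le_mul_of_nonneg_right _ (by positivity)
      exact_mod_cast choose_sq_le_centralBinom n k
    have hidx : ∀ k : ℕ, (n+1) + k - 1 = n + k := by intro k; omega
    have hsum : f (n+1) ≤ B := by
      rw [hf]
      simp only [Nat.add_sub_cancel]
      calc (1 / 2 : ℝ) *
          ∑ k ∈ range (n+1),
            ((n.choose k : ℝ) * (1 / 2 : ℝ) ^ n) *
              (((n+1 + k - 1).choose k : ℝ) * (2 / 3 : ℝ) ^ (n+1) * (1 / 3 : ℝ) ^ k)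
          ≤ 1 * ∑ k ∈ range (n+1),
              B * (((n + k).choose k : ℝ) * (2 / 3 : ℝ) ^ (n+1) * (1 / 3 : ℝ) ^ k) := by
            apply mul_le_mul (by norm_num) _ _ (by norm_num)
            · apply Finset.sum_le_sum
              intro k _
              rw [hidx k]
              exact mul_le_mul_of_nonneg_right (hp k) (by positivity)
            · apply Finset.sum_nonneg; intro k _; positivity
        _ = B * ((2/3)^(n+1) * ∑ k ∈ range (n+1), ((n + k).choose k : ℝ) * (1 / 3 : ℝ) ^ k) := by
            rw [one_mul, Finset.mul_sum, Finset.mul_sum]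
            apply Finset.sum_congr rfl; intro k _; ring
        _ ≤ B * ((2/3)^(n+1) * (3/2)^(n+1)) := by
            apply mul_le_mul_of_nonneg_left _ hBnn
            apply mul_le_mul_of_nonneg_left (negbin_partial_sum_le n (n+1)) (by positivity)
        _ = B := by rw [← mul_pow]; norm_num
    have hBle : B ≤ Real.sqrt (1 / Real.sqrt (n+1)) := by
      apply Real.sqrt_le_sqrt
      have h3 : (0:ℝ) < 3*(n:ℝ)+1 := by positivity
      have h1 : ((n.centralBinom : ℝ) * (1/4)^n) ≤ 1 / Real.sqrt (3*n+1) := by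
        have hc := centralBinom_sq_bound n
        rw [le_div_iff₀ (Real.sqrt_pos.mpr h3)]
        have hx : (0:ℝ) ≤ (n.centralBinom : ℝ) * (1/4)^n * Real.sqrt (3*n+1) := by positivity
        have hsq : ((n.centralBinom : ℝ) * (1/4)^n * Real.sqrt (3*n+1))^2 ≤ 1 := by
          have heq : ((n.centralBinom : ℝ) * (1/4)^n * Real.sqrt (3*n+1))^2
              = (n.centralBinom:ℝ)^2 * (3*n+1) * ((1/4)^n)^2 := by
            rw [mul_pow, mul_pow, Real.sq_sqrt h3.le]; ring
          rw [heq]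
          calc (n.centralBinom:ℝ)^2 * (3*(n:ℝ)+1) * ((1/4)^n)^2
              ≤ 16^n * ((1/4)^n)^2 := mul_le_mul_of_nonneg_right hc (by positivity)
            _ = 1 := by rw [← pow_mul, mul_comm n 2, pow_mul, ← mul_pow]; norm_num
        nlinarith
      calc ((n.centralBinom : ℝ) * (1/4)^n) ≤ 1 / Real.sqrt (3*n+1) := h1
        _ ≤ 1 / Real.sqrt (n+1) := by
            apply div_le_div_of_nonneg_left (by norm_num) (Real.sqrt_pos.mpr hn1)
            apply Real.sqrt_le_sqrt; linarith
    exact hsum.trans hBle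
  have hg : Tendsto (fun r : ℕ => Real.sqrt (1 / Real.sqrt r)) atTop (nhds 0) := by
    have h0 : Tendsto (fun r : ℕ => 1/(r:ℝ)) atTop (nhds 0) :=
      tendsto_one_div_atTop_nhds_zero_nat
    have h1 := (Real.continuous_sqrt.tendsto 0).comp h0
    have h2 := (Real.continuous_sqrt.tendsto _).comp h1
    simp only [Function.comp_def, Real.sqrt_zero] at h2
    have heq : (fun r : ℕ => Real.sqrt (1 / Real.sqrt r))
        = fun r : ℕ => Real.sqrt (Real.sqrt (1/(r:ℝ))) := by
      funext r
      rw [one_div, one_div, ← Real.sqrt_inv]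
    rw [heq]
    exact h2
  apply squeeze_zero' (Eventually.of_forall hnonneg) _ hg
  filter_upwards [eventually_ge_atTop 1] with r hr
  obtain ⟨n, rfl⟩ : ∃ n, r = n+1 := ⟨r-1, by omega⟩
  have := key n
  simpa using this
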